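/- Let P be a real symmetric idempotent N×N matrix with tr(P) = L. Let (Ω, F, ℙ) be a probability space and x, y : Ω → ℝ^N random vectors such that the N pairs (x_k, y_k), k = 1,…,N, are mutually independent, E[x_k] = 0 and E[y_k] = 0 for all k, and there are finite constants m_x, m_y with E[x_k²] = m_x and E[y_k²] = m_y for all k. Then E[|xᵀPy|] ≤ L·√(m_x·m_y). -/

import Mathlib

open Matrix MeasureTheory ProbabilityTheory

lemma sqmom_key {Ω : Type*} [MeasureSpace Ω] (hprob : IsProbabilityMeasure (ℙ : Measure Ω))
    {N : ℕ} (Pm : Matrix (Fin N) (Fin N) ℝ) (z : Ω → Fin N → ℝ)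
    (hzm : ∀ k, Measurable fun ω => z ω k)
    (hzind : ∀ j k, j ≠ k → IndepFun (fun ω => z ω j) (fun ω => z ω k) ℙ)
    (hz0 : ∀ k, ∫ ω, z ω k = 0) (m : ℝ)
    (hz2i : ∀ k, Integrable fun ω => (z ω k) ^ 2)
    (hz2 : ∀ k, ∫ ω, (z ω k) ^ 2 = m) :
    Integrable (fun ω => ∑ i, (Pm.mulVec (z ω)) i ^ 2) ∧
      ∫ ω, ∑ i, (Pm.mulVec (z ω)) i ^ 2 = (∑ i, ∑ j, Pm i j ^ 2) * m := by
  have hgi : ∀ j k : Fin N, Integrable (fun ω => z ω j * z ω k) := by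
    intro j k
    refine Integrable.mono (((hz2i j).add (hz2i k)).div_const 2)
      (((hzm j).mul (hzm k)).aestronglyMeasurable) (Filter.Eventually.of_forall fun ω => ?_)
    have h1 : |z ω j * z ω k| ≤ (z ω j ^ 2 + z ω k ^ 2) / 2 := by
      rw [abs_mul]
      nlinarith [sq_nonneg (|z ω j| - |z ω k|), sq_abs (z ω j), sq_abs (z ω k)]
    have h2 : (0:ℝ) ≤ (z ω j ^ 2 + z ω k ^ 2) / 2 := by positivity
    calc ‖z ω j * z ω k‖ = |z ω j * z ω k| := Real.norm_eq_abs _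
      _ ≤ (z ω j ^ 2 + z ω k ^ 2) / 2 := h1
      _ ≤ ‖(fun ω => ((fun ω => z ω j ^ 2) ω + (fun ω => z ω k ^ 2) ω) / 2) ω‖ := by
          rw [Real.norm_eq_abs]; exact le_abs_self _
  have hgint : ∀ j k : Fin N, ∫ ω, z ω j * z ω k = if j = k then m else 0 := by
    intro j k
    by_cases hjk : j = k
    · subst hjk; simp [← sq, hz2 j]
    · rw [if_neg hjk, (hzind j k hjk).integral_fun_mul_eq_mul_integral (hzm j).aestronglyMeasurable
        (hzm k).aestronglyMeasurable, hz0 j, zero_mul]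
  have hexp : ∀ ω, (fun ω => ∑ i, (Pm.mulVec (z ω)) i ^ 2) ω =
      ∑ i, ∑ j, ∑ k, (Pm i j * Pm i k) * (z ω j * z ω k) := by
    intro ω
    refine Finset.sum_congr rfl fun i _ => ?_
    rw [Matrix.mulVec, dotProduct, sq, Finset.sum_mul_sum]
    exact Finset.sum_congr rfl fun j _ => Finset.sum_congr rfl fun k _ => by ring
  have hInt : Integrable (fun ω => ∑ i, (Pm.mulVec (z ω)) i ^ 2) := by
    have : Integrable (fun ω => ∑ i, ∑ j, ∑ k : Fin N, (Pm i j * Pm i k) * (z ω j * z ω k)) := by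
      refine integrable_finset_sum _ fun i _ => integrable_finset_sum _ fun j _ =>
        integrable_finset_sum _ fun k _ => (hgi j k).const_mul _
    exact this.congr (Filter.Eventually.of_forall fun ω => (hexp ω).symm)
  refine ⟨hInt, ?_⟩
  calc ∫ ω, ∑ i, (Pm.mulVec (z ω)) i ^ 2
      = ∫ ω, ∑ i, ∑ j, ∑ k : Fin N, (Pm i j * Pm i k) * (z ω j * z ω k) :=
        integral_congr_ae (Filter.Eventually.of_forall hexp)
    _ = ∑ i, ∑ j, ∑ k : Fin N, (Pm i j * Pm i k) * ∫ ω, z ω j * z ω k := by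
        rw [integral_finset_sum _ fun i _ => integrable_finset_sum _ fun j _ =>
          integrable_finset_sum _ fun k _ => (hgi j k).const_mul _]
        refine Finset.sum_congr rfl fun i _ => ?_
        rw [integral_finset_sum _ fun j _ => integrable_finset_sum _ fun k _ =>
          (hgi j k).const_mul _]
        refine Finset.sum_congr rfl fun j _ => ?_
        rw [integral_finset_sum _ fun k _ => (hgi j k).const_mul _]
        exact Finset.sum_congr rfl fun k _ => integral_const_mul _ _
    _ = (∑ i, ∑ j, Pm i j ^ 2) * m := by
        simp only [hgint, mul_ite, mul_zero]
        rw [Finset.sum_mul]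
        refine Finset.sum_congr rfl fun i _ => ?_
        rw [Finset.sum_mul]
        refine Finset.sum_congr rfl fun j _ => ?_
        simp [Finset.sum_ite_eq, sq]

/-- Let `P` be a real symmetric idempotent `N × N` matrix with `tr(P) = L`. If the pairs
`(x_k, y_k)` are mutually independent, mean zero, with `E[x_k²] = m_x` and `E[y_k²] = m_y`,
then `E[|xᵀ P y|] ≤ L √(m_x m_y)`. -/
theorem abs_expectation_quadratic_form_le
    {Ω : Type*} [MeasureSpace Ω] (hprob : IsProbabilityMeasure (ℙ : Measure Ω))
    (N L : ℕ) (Pm : Matrix (Fin N) (Fin N) ℝ)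
    (hsym : Pmᵀ = Pm) (hidem : Pm * Pm = Pm) (htr : Pm.trace = (L : ℝ))
    (x y : Ω → Fin N → ℝ)
    (hmeas : ∀ k, Measurable fun ω => (x ω k, y ω k))
    (hindep : iIndepFun (fun k ω => (x ω k, y ω k)) ℙ)
    (hmx : ∀ k, ∫ ω, x ω k = 0) (hmy : ∀ k, ∫ ω, y ω k = 0)
    (mx my : ℝ)
    (hx2i : ∀ k, Integrable fun ω => (x ω k) ^ 2)
    (hx2 : ∀ k, ∫ ω, (x ω k) ^ 2 = mx)
    (hy2i : ∀ k, Integrable fun ω => (y ω k) ^ 2)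
    (hy2 : ∀ k, ∫ ω, (y ω k) ^ 2 = my) :
    ∫ ω, |x ω ⬝ᵥ Pm.mulVec (y ω)| ≤ L * Real.sqrt (mx * my) := by
  -- constants
  set A : Ω → ℝ := fun ω => ∑ i, (Pm.mulVec (x ω)) i ^ 2 with hAdef
  set B : Ω → ℝ := fun ω => ∑ i, (Pm.mulVec (y ω)) i ^ 2 with hBdef
  have hC : (∑ i, ∑ j, Pm i j ^ 2) = (L:ℝ) := by
    have h1 : Pm * Pmᵀ = Pm := by rw [hsym, hidem]
    have h2 : (Pm * Pmᵀ).trace = ∑ i, ∑ j, Pm i j ^ 2 := by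
      simp [Matrix.trace, Matrix.diag, Matrix.mul_apply, sq]
    calc ∑ i, ∑ j, Pm i j ^ 2 = (Pm * Pmᵀ).trace := h2.symm
      _ = Pm.trace := by rw [h1]
      _ = (L:ℝ) := htr
  have hxm : ∀ k, Measurable fun ω => x ω k := fun k => (hmeas k).fst
  have hym : ∀ k, Measurable fun ω => y ω k := fun k => (hmeas k).snd
  have hxind : ∀ j k, j ≠ k → IndepFun (fun ω => x ω j) (fun ω => x ω k) ℙ := fun j k hjk =>
    (hindep.indepFun hjk).comp measurable_fst measurable_fst
  have hyind : ∀ j k, j ≠ k → IndepFun (fun ω => y ω j) (fun ω => y ω k) ℙ := fun j k hjk =>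
    (hindep.indepFun hjk).comp measurable_snd measurable_snd
  obtain ⟨hAi, hAint⟩ := sqmom_key hprob Pm x hxm hxind hmx mx hx2i hx2
  obtain ⟨hBi, hBint⟩ := sqmom_key hprob Pm y hym hyind hmy my hy2i hy2
  rw [hC] at hAint hBint
  have hAnn : ∀ ω, 0 ≤ A ω := fun ω => Finset.sum_nonneg fun i _ => sq_nonneg _
  have hBnn : ∀ ω, 0 ≤ B ω := fun ω => Finset.sum_nonneg fun i _ => sq_nonneg _
  -- Cauchy-Schwarz pointwise
  have cs : ∀ u v : Fin N → ℝ,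
      |u ⬝ᵥ v| ≤ Real.sqrt (∑ i, u i ^ 2) * Real.sqrt (∑ i, v i ^ 2) := by
    intro u v
    rw [abs_le]
    constructor
    · have h := Real.sum_mul_le_sqrt_mul_sqrt Finset.univ (fun i => -u i) v
      simp only [neg_mul, Finset.sum_neg_distrib, neg_sq] at h
      simp only [dotProduct]
      linarith
    · simpa [dotProduct] using Real.sum_mul_le_sqrt_mul_sqrt Finset.univ u v
  have key : ∀ ω, |x ω ⬝ᵥ Pm.mulVec (y ω)| ≤ Real.sqrt (A ω) * Real.sqrt (B ω) := by
    intro ω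
    have e : x ω ⬝ᵥ Pm.mulVec (y ω) = (Pm.mulVec (x ω)) ⬝ᵥ (Pm.mulVec (y ω)) := by
      conv_lhs => rw [← hidem, ← Matrix.mulVec_mulVec, Matrix.dotProduct_mulVec]
      congr 1
      rw [← hsym, Matrix.vecMul_transpose, hsym]
    rw [e]
    exact cs _ _
  -- degenerate cases
  by_cases h0 : (L:ℝ) * mx = 0 ∨ (L:ℝ) * my = 0
  · have hzero : ∫ ω, |x ω ⬝ᵥ Pm.mulVec (y ω)| = 0 := by
      have hae : (fun ω => |x ω ⬝ᵥ Pm.mulVec (y ω)|) =ᵐ[ℙ] 0 := by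
        rcases h0 with h0 | h0
        · have hA0 : A =ᵐ[ℙ] 0 := by
            rw [← integral_eq_zero_iff_of_nonneg (fun ω => hAnn ω) hAi, hAint, h0]
          filter_upwards [hA0] with ω hω
          have := key ω
          simp only [Pi.zero_apply] at hω
          rw [hω] at this
          simp only [Real.sqrt_zero, zero_mul] at this
          exact le_antisymm this (abs_nonneg _)
        · have hB0 : B =ᵐ[ℙ] 0 := by
            rw [← integral_eq_zero_iff_of_nonneg (fun ω => hBnn ω) hBi, hBint, h0]
          filter_upwards [hB0] with ω hω
          have := key ω
          simp only [Pi.zero_apply] at hω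
          rw [hω] at this
          simp only [Real.sqrt_zero, mul_zero] at this
          exact le_antisymm this (abs_nonneg _)
      rw [integral_congr_ae hae]
      simp
    rw [hzero]
    positivity
  · push_neg at h0
    obtain ⟨h0x, h0y⟩ := h0
    have hN : 0 < N := by
      rcases Nat.eq_zero_or_pos N with h | h
      · exfalso
        apply h0x
        subst h
        simp [Matrix.trace] at htr
        rw [← htr, zero_mul]
      · exact h
    have hmxpos : 0 < mx := by
      have h1 : 0 ≤ mx := by
        rw [← hx2 ⟨0, hN⟩]
        exact integral_nonneg fun ω => sq_nonneg _
      rcases h1.lt_or_eq with h | h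
      · exact h
      · exact absurd (by rw [← h, mul_zero]) h0x
    have hmypos : 0 < my := by
      have h1 : 0 ≤ my := by
        rw [← hy2 ⟨0, hN⟩]
        exact integral_nonneg fun ω => sq_nonneg _
      rcases h1.lt_or_eq with h | h
      · exact h
      · exact absurd (by rw [← h, mul_zero]) h0y
    set t : ℝ := Real.sqrt my / Real.sqrt mx with htdef
    have htpos : 0 < t := div_pos (Real.sqrt_pos.2 hmypos) (Real.sqrt_pos.2 hmxpos)
    have amgm : ∀ a b : ℝ, 0 ≤ a → 0 ≤ b →
        Real.sqrt a * Real.sqrt b ≤ (t * a + b / t) / 2 := by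
      intro a b ha hb
      have hab : Real.sqrt (t * a) * Real.sqrt (b / t) = Real.sqrt a * Real.sqrt b := by
        rw [← Real.sqrt_mul (by positivity), ← Real.sqrt_mul ha]
        congr 1
        field_simp
      have h1 : Real.sqrt (t * a) ^ 2 = t * a := Real.sq_sqrt (by positivity)
      have h2 : Real.sqrt (b / t) ^ 2 = b / t := Real.sq_sqrt (by positivity)
      nlinarith [sq_nonneg (Real.sqrt (t * a) - Real.sqrt (b / t))]
    have hbound : ∀ ω, |x ω ⬝ᵥ Pm.mulVec (y ω)| ≤ (t * A ω + B ω / t) / 2 := fun ω =>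
      (key ω).trans (amgm _ _ (hAnn ω) (hBnn ω))
    have hgint : Integrable (fun ω => (t * A ω + B ω / t) / 2) :=
      ((hAi.const_mul t).add (hBi.div_const t)).div_const 2
    have hstep : ∫ ω, |x ω ⬝ᵥ Pm.mulVec (y ω)| ≤ ∫ ω, (t * A ω + B ω / t) / 2 :=
      integral_mono_of_nonneg (Filter.Eventually.of_forall fun ω => abs_nonneg _) hgint
        (Filter.Eventually.of_forall hbound)
    have hgval : ∫ ω, (t * A ω + B ω / t) / 2 = (L:ℝ) * Real.sqrt (mx * my) := by
      rw [integral_div, integral_add (hAi.const_mul t) (hBi.div_const t),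
        integral_const_mul, integral_div, hAint, hBint]
      have hmxs : Real.sqrt mx * Real.sqrt mx = mx := Real.mul_self_sqrt hmxpos.le
      have hmys : Real.sqrt my * Real.sqrt my = my := Real.mul_self_sqrt hmypos.le
      have e1 : t * mx = Real.sqrt mx * Real.sqrt my := by
        rw [htdef]
        field_simp
        linear_combination (-1) * hmxs
      have e2 : my / t = Real.sqrt mx * Real.sqrt my := by
        rw [htdef]
        field_simp
        linear_combination (-1) * hmys
      rw [Real.sqrt_mul hmxpos.le]
      calc (t * ((L:ℝ) * mx) + (L:ℝ) * my / t) / 2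
          = ((L:ℝ) * (t * mx) + (L:ℝ) * (my / t)) / 2 := by ring
        _ = (L:ℝ) * (Real.sqrt mx * Real.sqrt my) := by rw [e1, e2]; ring
    rw [← hgval]
    exact hstep
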